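/- Let r ≥ 1 and let m_1, …, m_r and n_1, …, n_r be positive integers. The quotient of the free abelian group ℤ^r (with standard basis e_1, …, e_r) by the subgroup generated by the vectors m_1 e_1, n_i e_i − m_{i+1} e_{i+1} for i = 1, …, r−1, and n_r e_r is the trivial group if and only if gcd(m_i, n_j) = 1 for all indices with 1 ≤ i ≤ j ≤ r. -/

import Mathlib

/-- The relation vectors `m_1 e_1`, `n_i e_i − m_{i+1} e_{i+1}`
(`i = 1, …, r−1`) and `n_r e_r` in the free abelian group `ℤ^r`, where
`r = r' + 1`. -/
def relVectors (r' : ℕ) (m n : Fin (r' + 1) → ℕ) :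
    Set (Fin (r' + 1) → ℤ) :=
  {Pi.single (0 : Fin (r' + 1)) (m 0 : ℤ)} ∪
    Set.range (fun i : Fin r' =>
      Pi.single i.castSucc (n i.castSucc : ℤ) - Pi.single i.succ (m i.succ : ℤ)) ∪
    {Pi.single (Fin.last r') (n (Fin.last r') : ℤ)}


open Fin.NatCast

section aux
variable (r' : ℕ) (m n : Fin (r' + 1) → ℕ)

lemma mem_rel_left : Pi.single (0 : Fin (r' + 1)) (m 0 : ℤ) ∈ relVectors r' m n := by
  simp [relVectors]

lemma mem_rel_right : Pi.single (Fin.last r') (n (Fin.last r') : ℤ) ∈ relVectors r' m n := by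
  simp [relVectors]

lemma mem_rel_pair (i : Fin r') :
    Pi.single i.castSucc (n i.castSucc : ℤ) - Pi.single i.succ (m i.succ : ℤ)
      ∈ relVectors r' m n := by
  simp only [relVectors, Set.mem_union, Set.mem_range]
  exact Or.inl (Or.inr ⟨i, rfl⟩)

lemma single_zsmul_mem {a : Fin (r' + 1)} {x : ℤ}
    (h : (Pi.single a x : Fin (r' + 1) → ℤ) ∈ AddSubgroup.closure (relVectors r' m n))
    (c : ℤ) :
    (Pi.single a (c * x) : Fin (r' + 1) → ℤ) ∈ AddSubgroup.closure (relVectors r' m n) := by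
  have : (Pi.single a (c * x) : Fin (r' + 1) → ℤ) = c • (Pi.single a x : Fin (r' + 1) → ℤ) := by
    rw [← smul_eq_mul, Pi.single_smul]
  rw [this]
  exact zsmul_mem h c

/-- M-products in the closure. -/
lemma Mprod_mem (k : ℕ) (hk : k ≤ r') :
    (Pi.single ((k : ℕ) : Fin (r' + 1))
      (∏ l ∈ Finset.range (k + 1), (m ((l : ℕ) : Fin (r' + 1)) : ℤ)) : Fin (r' + 1) → ℤ) ∈
      AddSubgroup.closure (relVectors r' m n) := by
  induction k with
  | zero =>
      simpa using AddSubgroup.subset_closure (mem_rel_left r' m n)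
  | succ k ih =>
      have hk' : k ≤ r' := Nat.le_of_succ_le hk
      have hkr : k < r' := hk
      set i : Fin r' := ⟨k, hkr⟩ with hi
      have hcs : i.castSucc = ((k : ℕ) : Fin (r' + 1)) := by
        apply Fin.ext
        rw [Fin.val_cast_of_lt (Nat.lt_succ_of_le hk')]
        rfl
      have hsc : i.succ = (((k + 1 : ℕ)) : Fin (r' + 1)) := by
        apply Fin.ext
        rw [Fin.val_cast_of_lt (Nat.succ_lt_succ hkr)]
        rfl
      have key : ∀ Mk : ℤ, (Pi.single (((k + 1 : ℕ)) : Fin (r' + 1))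
          (Mk * (m (((k + 1 : ℕ)) : Fin (r' + 1)) : ℤ)) : Fin (r' + 1) → ℤ) =
          (n i.castSucc : ℤ) • (Pi.single ((k : ℕ) : Fin (r' + 1)) Mk : Fin (r' + 1) → ℤ) -
            Mk • (Pi.single i.castSucc (n i.castSucc : ℤ) -
              Pi.single i.succ (m i.succ : ℤ)) := by
        intro Mk
        rw [hcs, hsc]
        ext t
        simp only [Pi.sub_apply, Pi.smul_apply, Pi.single_apply, smul_eq_mul, smul_sub]
        split_ifs <;> ring
      rw [show (k + 2) = (k + 1) + 1 from rfl, Finset.prod_range_succ, key]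
      exact sub_mem (zsmul_mem (ih hk') _)
        (zsmul_mem (AddSubgroup.subset_closure (mem_rel_pair r' m n i)) _)

/-- N-products in the closure. -/
lemma Nprod_mem (k : ℕ) (hk : k ≤ r') :
    (Pi.single ((k : ℕ) : Fin (r' + 1))
      (∏ l ∈ Finset.Ico k (r' + 1), (n ((l : ℕ) : Fin (r' + 1)) : ℤ)) : Fin (r' + 1) → ℤ) ∈
      AddSubgroup.closure (relVectors r' m n) := by
  obtain ⟨d, hd⟩ : ∃ d, k + d = r' := ⟨r' - k, Nat.add_sub_cancel' hk⟩
  clear hk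
  induction d generalizing k with
  | zero =>
      simp only [Nat.add_zero] at hd
      subst hd
      have hlast : ((k : ℕ) : Fin (k + 1)) = Fin.last k := by
        apply Fin.ext
        rw [Fin.val_cast_of_lt (Nat.lt_succ_self k)]
        rfl
      rw [show Finset.Ico k (k + 1) = {k} by rw [Nat.Ico_succ_singleton],
        Finset.prod_singleton, hlast]
      exact AddSubgroup.subset_closure (mem_rel_right k m n)
  | succ d ih =>
      have hkr : k < r' := by omega
      set i : Fin r' := ⟨k, hkr⟩ with hi
      have hcs : i.castSucc = ((k : ℕ) : Fin (r' + 1)) := by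
        apply Fin.ext
        rw [Fin.val_cast_of_lt (by omega : k < r' + 1)]
        rfl
      have hsc : i.succ = (((k + 1 : ℕ)) : Fin (r' + 1)) := by
        apply Fin.ext
        rw [Fin.val_cast_of_lt (by omega : k + 1 < r' + 1)]
        rfl
      have key : ∀ N : ℤ, (Pi.single ((k : ℕ) : Fin (r' + 1))
          ((n ((k : ℕ) : Fin (r' + 1)) : ℤ) * N) : Fin (r' + 1) → ℤ) =
          N • (Pi.single i.castSucc (n i.castSucc : ℤ) -
              Pi.single i.succ (m i.succ : ℤ)) +
            (m i.succ : ℤ) • (Pi.single (((k + 1 : ℕ)) : Fin (r' + 1)) N : Fin (r' + 1) → ℤ) := by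
        intro N
        rw [hcs, hsc]
        ext t
        simp only [Pi.add_apply, Pi.sub_apply, Pi.smul_apply, Pi.single_apply,
          smul_eq_mul, smul_sub]
        split_ifs <;> ring
      rw [Finset.prod_eq_prod_Ico_succ_bot (by omega : k < r' + 1), key]
      exact add_mem
        (zsmul_mem (AddSubgroup.subset_closure (mem_rel_pair r' m n i)) _)
        (zsmul_mem (ih (k + 1) (by omega)) _)

lemma single_one_mem
    (hgcd : ∀ i j : Fin (r' + 1), i ≤ j → Nat.gcd (m i) (n j) = 1)
    (k : ℕ) (hk : k ≤ r') :
    (Pi.single ((k : ℕ) : Fin (r' + 1)) (1 : ℤ) : Fin (r' + 1) → ℤ) ∈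
      AddSubgroup.closure (relVectors r' m n) := by
  set M : ℕ := ∏ l ∈ Finset.range (k + 1), m ((l : ℕ) : Fin (r' + 1)) with hM
  set N : ℕ := ∏ l ∈ Finset.Ico k (r' + 1), n ((l : ℕ) : Fin (r' + 1)) with hN
  have hcop : Nat.Coprime M N := by
    apply Nat.Coprime.prod_left
    intro a ha
    apply Nat.Coprime.prod_right
    intro b hb
    rw [Finset.mem_range] at ha
    rw [Finset.mem_Ico] at hb
    have hab : ((a : ℕ) : Fin (r' + 1)) ≤ ((b : ℕ) : Fin (r' + 1)) := by
      rw [Fin.le_def, Fin.val_cast_of_lt (by omega), Fin.val_cast_of_lt (by omega)]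
      omega
    exact hgcd _ _ hab
  have hbez : (1 : ℤ) = (M : ℤ) * Nat.gcdA M N + (N : ℤ) * Nat.gcdB M N := by
    have := Nat.gcd_eq_gcd_ab M N
    rwa [hcop, Nat.cast_one] at this
  have hMmem := Mprod_mem r' m n k hk
  have hNmem := Nprod_mem r' m n k hk
  push_cast at hMmem hNmem
  have h1 : (Pi.single ((k : ℕ) : Fin (r' + 1)) (1 : ℤ) : Fin (r' + 1) → ℤ) =
      Pi.single ((k : ℕ) : Fin (r' + 1)) (Nat.gcdA M N * (M : ℤ)) +
        Pi.single ((k : ℕ) : Fin (r' + 1)) (Nat.gcdB M N * (N : ℤ)) := by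
    rw [← Pi.single_add]
    rw [hbez]; ring_nf
  rw [h1]
  refine add_mem (single_zsmul_mem r' m n ?_ _) (single_zsmul_mem r' m n ?_ _)
  · rw [hM]; push_cast; exact hMmem
  · rw [hN]; push_cast; exact hNmem

lemma closure_eq_top
    (hgcd : ∀ i j : Fin (r' + 1), i ≤ j → Nat.gcd (m i) (n j) = 1)
    (x : Fin (r' + 1) → ℤ) :
    x ∈ AddSubgroup.closure (relVectors r' m n) := by
  have hx : x = ∑ a : Fin (r' + 1), Pi.single a (x a) := (Finset.univ_sum_single x).symm
  rw [hx]
  refine sum_mem fun a _ => ?_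
  have ha : ((a.val : ℕ) : Fin (r' + 1)) = a := Fin.cast_val_eq_self a
  have h1 : (Pi.single a (1 : ℤ) : Fin (r' + 1) → ℤ) ∈
      AddSubgroup.closure (relVectors r' m n) := by
    rw [← ha]; exact single_one_mem r' m n hgcd a.val (by omega)
  have := single_zsmul_mem r' m n h1 (x a)
  rwa [mul_one] at this

end aux

section fwd
variable (r' : ℕ) (m n : Fin (r' + 1) → ℕ)

lemma gcd_of_trivial
    (hS : ∀ v : Fin (r' + 1) → ℤ, v ∈ AddSubgroup.closure (relVectors r' m n))
    (i j : Fin (r' + 1)) (hij : i ≤ j) (hg : ¬ Nat.gcd (m i) (n j) = 1) :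
    False := by
  set g := Nat.gcd (m i) (n j) with hgdef
  set p := g.minFac with hpdef
  have hp : p.Prime := Nat.minFac_prime hg
  haveI : Fact p.Prime := ⟨hp⟩
  haveI : NeZero p := ⟨hp.pos.ne'⟩
  have hpm : p ∣ m i := (Nat.minFac_dvd g).trans (Nat.gcd_dvd_left _ _)
  have hpn : p ∣ n j := (Nat.minFac_dvd g).trans (Nat.gcd_dvd_right _ _)
  -- index bookkeeping
  have hjr : j.val ≤ r' := by omega
  set P : ℕ → Prop := fun k => p ∣ m ((k : ℕ) : Fin (r' + 1)) with hPdef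
  have hPi : P i.val := by
    rw [hPdef]; simpa [Fin.cast_val_eq_self] using hpm
  set istar := Nat.findGreatest P j.val with histardef
  have hPistar : P istar := Nat.findGreatest_spec (Fin.le_def.mp hij) hPi
  have histar_le : istar ≤ j.val := Nat.findGreatest_le _
  have hQex : ∃ d, p ∣ n (((istar + d : ℕ)) : Fin (r' + 1)) := by
    refine ⟨j.val - istar, ?_⟩
    rw [Nat.add_sub_cancel' histar_le]
    simpa [Fin.cast_val_eq_self] using hpn
  set dstar := Nat.find hQex with hdstardef
  set jstar := istar + dstar with hjstardef
  have hpnj : p ∣ n ((jstar : ℕ) : Fin (r' + 1)) := Nat.find_spec hQex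
  have hjstar_le : jstar ≤ j.val := by
    have := Nat.find_min' hQex (by
      rw [Nat.add_sub_cancel' histar_le]
      simpa [Fin.cast_val_eq_self] using hpn)
    omega
  have hm_not : ∀ k, istar < k → k ≤ jstar → ¬ p ∣ m ((k : ℕ) : Fin (r' + 1)) :=
    fun k h1 h2 => Nat.findGreatest_is_greatest (P := P) (n := j.val) h1 (le_trans h2 hjstar_le)
  have hn_not : ∀ k, istar ≤ k → k < jstar → ¬ p ∣ n ((k : ℕ) : Fin (r' + 1)) := by
    intro k h1 h2 hdvd
    have hdk : k - istar < dstar := by omega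
    exact Nat.find_min hQex hdk (by rwa [Nat.add_sub_cancel' h1])
  -- the coefficient vector
  set c : ℕ → ℤ := fun k =>
    if istar ≤ k ∧ k ≤ jstar then
      ((∏ l ∈ Finset.Ico istar k, n ((l : ℕ) : Fin (r' + 1)) : ℕ) : ℤ) *
        ((∏ l ∈ Finset.Ico (k + 1) (jstar + 1), m ((l : ℕ) : Fin (r' + 1)) : ℕ) : ℤ)
    else 0 with hcdef
  -- the homomorphism
  set φ : (Fin (r' + 1) → ℤ) →+ ZMod p :=
    { toFun := fun x => ∑ k : Fin (r' + 1), ((x k * c k.val : ℤ) : ZMod p),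
      map_zero' := by simp,
      map_add' := by
        intro x y
        simp [add_mul, Finset.sum_add_distrib] } with hφdef
  have φsingle : ∀ (a : Fin (r' + 1)) (t : ℤ),
      φ (Pi.single a t) = ((t * c a.val : ℤ) : ZMod p) := by
    intro a t
    rw [hφdef]
    simp only [AddMonoidHom.coe_mk, ZeroHom.coe_mk]
    rw [Finset.sum_eq_single a]
    · rw [Pi.single_eq_same]
    · intro b _ hb
      rw [Pi.single_eq_of_ne hb, zero_mul, Int.cast_zero]
    · intro h; exact absurd (Finset.mem_univ a) h
  have hczero : ∀ k : ℕ, ¬(istar ≤ k ∧ k ≤ jstar) → c k = 0 := by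
    intro k hk
    rw [hcdef]
    exact if_neg hk
  -- φ vanishes on the relation vectors
  have hker : ∀ v ∈ relVectors r' m n, φ v = 0 := by
    intro v hv
    simp only [relVectors, Set.mem_union, Set.mem_singleton_iff, Set.mem_range] at hv
    rcases hv with (rfl | ⟨i0, rfl⟩) | rfl
    · -- v = single 0 (m 0)
      rw [φsingle]
      by_cases h0 : istar = 0
      · have hdvd : p ∣ m ((0 : Fin (r' + 1))) := by
          have := hPistar
          rw [hPdef, h0] at this
          simpa using this
        have hz : ((m (0 : Fin (r' + 1)) : ℕ) : ZMod p) = 0 :=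
          (ZMod.natCast_eq_zero_iff _ p).mpr hdvd
        rw [Int.cast_mul, Int.cast_natCast, hz, zero_mul]
      · have : c (0 : Fin (r' + 1)).val = 0 := by
          rw [show (0 : Fin (r' + 1)).val = 0 from rfl]
          exact hczero 0 (by omega)
        rw [this, mul_zero, Int.cast_zero]
    · -- pair relation
      rw [map_sub, φsingle, φsingle]
      set k := i0.val with hkdef
      have hk : k < r' := i0.isLt
      have e1 : n i0.castSucc = n ((k : ℕ) : Fin (r' + 1)) := by
        congr 1
        apply Fin.ext
        rw [Fin.val_cast_of_lt (by omega)]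
        rfl
      have e2 : m i0.succ = m (((k + 1 : ℕ)) : Fin (r' + 1)) := by
        congr 1
        apply Fin.ext
        rw [Fin.val_cast_of_lt (by omega)]
        rfl
      have ev1 : i0.castSucc.val = k := rfl
      have ev2 : i0.succ.val = k + 1 := rfl
      rw [e1, e2, ev1, ev2]
      by_cases h1 : k + 1 < istar
      · rw [hczero k (by omega), hczero (k + 1) (by omega)]
        simp
      by_cases h2 : k + 1 = istar
      · rw [hczero k (by omega)]
        have hdvd : p ∣ m (((k + 1 : ℕ)) : Fin (r' + 1)) := by
          have := hPistar
          rwa [hPdef, ← h2] at this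
        have hz : ((m (((k + 1 : ℕ)) : Fin (r' + 1)) : ℕ) : ZMod p) = 0 :=
          (ZMod.natCast_eq_zero_iff _ p).mpr hdvd
        rw [mul_zero, Int.cast_zero, zero_sub, neg_eq_zero, Int.cast_mul,
          Int.cast_natCast, hz, zero_mul]
      by_cases h3 : istar ≤ k ∧ k < jstar
      · have hnat : n ((k : ℕ) : Fin (r' + 1)) *
            ((∏ l ∈ Finset.Ico istar k, n ((l : ℕ) : Fin (r' + 1))) *
              (∏ l ∈ Finset.Ico (k + 1) (jstar + 1), m ((l : ℕ) : Fin (r' + 1)))) =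
            m (((k + 1 : ℕ)) : Fin (r' + 1)) *
            ((∏ l ∈ Finset.Ico istar (k + 1), n ((l : ℕ) : Fin (r' + 1))) *
              (∏ l ∈ Finset.Ico (k + 1 + 1) (jstar + 1), m ((l : ℕ) : Fin (r' + 1)))) := by
          rw [Finset.prod_Ico_succ_top h3.1,
            Finset.prod_eq_prod_Ico_succ_bot (by omega : k + 1 < jstar + 1)]
          ring
        have hint : (n ((k : ℕ) : Fin (r' + 1)) : ℤ) * c k =
            (m (((k + 1 : ℕ)) : Fin (r' + 1)) : ℤ) * c (k + 1) := by
          rw [hcdef]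
          simp only [if_pos (show istar ≤ k ∧ k ≤ jstar by omega),
            if_pos (show istar ≤ k + 1 ∧ k + 1 ≤ jstar by omega)]
          exact_mod_cast hnat
        rw [hint, sub_self]
      by_cases h4 : k = jstar
      · have hdvd : p ∣ n ((k : ℕ) : Fin (r' + 1)) := by rwa [h4]
        have hz : ((n ((k : ℕ) : Fin (r' + 1)) : ℕ) : ZMod p) = 0 :=
          (ZMod.natCast_eq_zero_iff _ p).mpr hdvd
        rw [hczero (k + 1) (by omega), mul_zero, Int.cast_zero, sub_zero,
          Int.cast_mul, Int.cast_natCast, hz, zero_mul]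
      · rw [hczero k (by omega), hczero (k + 1) (by omega)]
        simp
    · -- v = single last (n last)
      rw [φsingle]
      by_cases hr : jstar = r'
      · have e3 : n (Fin.last r') = n ((jstar : ℕ) : Fin (r' + 1)) := by
          congr 1
          apply Fin.ext
          rw [Fin.val_cast_of_lt (by omega)]
          simp [hr]
        have hz : ((n ((jstar : ℕ) : Fin (r' + 1)) : ℕ) : ZMod p) = 0 :=
          (ZMod.natCast_eq_zero_iff _ p).mpr hpnj
        rw [e3, Int.cast_mul, Int.cast_natCast, hz, zero_mul]
      · have : c (Fin.last r').val = 0 := hczero _ (by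
          simp only [Fin.val_last]
          omega)
        rw [this, mul_zero, Int.cast_zero]
  -- conclusion
  have hle : AddSubgroup.closure (relVectors r' m n) ≤ φ.ker :=
    (AddSubgroup.closure_le _).mpr fun v hv => hker v hv
  have hv0 : φ (Pi.single ((istar : ℕ) : Fin (r' + 1)) (1 : ℤ)) = 0 :=
    hle (hS _)
  rw [φsingle, one_mul] at hv0
  have hvval : ((istar : ℕ) : Fin (r' + 1)).val = istar :=
    Fin.val_cast_of_lt (by omega)
  rw [hvval] at hv0
  have hcistar : c istar = ((∏ l ∈ Finset.Ico (istar + 1) (jstar + 1),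
      m ((l : ℕ) : Fin (r' + 1)) : ℕ) : ℤ) := by
    simp only [hcdef]
    rw [if_pos ⟨le_refl istar, by omega⟩, Finset.Ico_self, Finset.prod_empty,
      Nat.cast_one, one_mul]
  rw [hcistar, Int.cast_natCast] at hv0
  have hdvd : p ∣ ∏ l ∈ Finset.Ico (istar + 1) (jstar + 1), m ((l : ℕ) : Fin (r' + 1)) :=
    (ZMod.natCast_eq_zero_iff _ p).mp hv0
  obtain ⟨l, hl, hpl⟩ := (hp.prime.dvd_finset_prod_iff _).mp hdvd
  rw [Finset.mem_Ico] at hl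
  exact hm_not l (by omega) (by omega) hpl

end fwd

/-- The quotient `ℤ^r / ⟨m_1 e_1, n_i e_i − m_{i+1} e_{i+1}, n_r e_r⟩` is
trivial if and only if `gcd(m_i, n_j) = 1` for all `1 ≤ i ≤ j ≤ r`. -/
theorem abelian_quotient_trivial_iff_gcd (r' : ℕ)
    (m n : Fin (r' + 1) → ℕ)
    (hm : ∀ i, 0 < m i) (hn : ∀ j, 0 < n j) :
    (∀ x : (Fin (r' + 1) → ℤ) ⧸ AddSubgroup.closure (relVectors r' m n),
        x = 0) ↔
      ∀ i j : Fin (r' + 1), i ≤ j → Nat.gcd (m i) (n j) = 1 := by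
  constructor
  · intro h i j hij
    by_contra hg
    exact gcd_of_trivial r' m n
      (fun v => (QuotientAddGroup.eq_zero_iff v).mp (h _)) i j hij hg
  · intro hgcd x
    refine QuotientAddGroup.induction_on x fun v => ?_
    rw [QuotientAddGroup.eq_zero_iff]
    exact closure_eq_top r' m n hgcd v
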